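/- arXiv:1410.4276 — 2 statements merged into one kernel-verified Lean document; each statement's English description precedes it below -/
import Mathlib

section
/- Fix δ ∈ (0, 1/2). For every even m ≥ 8 there exist an m×m real orthogonal matrix T_m = (γ_{ij}) and eigenvalues λ_{1,m} ≥ λ_{2,m} ≥ ... ≥ λ_{m,m} > 0 with Σ_{j=1}^m λ_{j,m} = m, such that, with k = m/2 and σ_{i,m} := Σ_{j=k+1}^m λ_{j,m} γ_{ij}², the following hold: (1) liminf_{m→∞} λ_{m,m} > 0; (2) m^{-1}·√(Σ_{j=k+1}^m λ_{j,m}²) ≤ m^{-δ} for every such m; (3) for each m, σ_{i,m} > 0 for every 1 ≤ i ≤ m−1, but σ_{m,m} = 0; (4) lim_{m→∞} σ_{1,m} = 0 and liminf_{m→∞} σ_{k+1,m} > 0 (equivalently, with a_{i,m} = σ_{i,m}^{-1/2}, one has a_{i,m} < ∞ for 1 ≤ i ≤ m−1, a_{m,m} = ∞, lim_{m→∞} a_{1,m} = ∞, and limsup_{m→∞} a_{k+1,m} < ∞). -/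
open Matrix Finset

noncomputable def sq0 (k : ℕ) (a : Fin k) : ℝ :=
  if (a : ℕ) = 0 then ((k : ℝ))⁻¹ else if (a : ℕ) = k - 1 then 1 else 1/2

lemma sq0_nonneg (k : ℕ) (a : Fin k) : 0 ≤ sq0 k a := by
  unfold sq0; split_ifs <;> positivity

lemma sq0_pos (k : ℕ) (a : Fin k) : 0 < sq0 k a := by
  have hk : 0 < k := a.pos
  have : (0:ℝ) < (k:ℝ) := by exact_mod_cast hk
  unfold sq0; split_ifs <;> positivity

lemma sq0_le_one (k : ℕ) (a : Fin k) : sq0 k a ≤ 1 := by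
  have hk : 0 < k := a.pos
  have h1 : (1:ℝ) ≤ (k:ℝ) := by exact_mod_cast hk
  unfold sq0; split_ifs
  · first
    | exact inv_le_one_of_one_le h1
    | exact inv_le_one_of_one_le₀ h1
    | exact inv_le_one_of_le h1 (by norm_num)
  · norm_num
  · norm_num

noncomputable def scf (k : ℕ) (a : Fin k) : ℝ := Real.sqrt (sq0 k a)
noncomputable def ccf (k : ℕ) (a : Fin k) : ℝ := Real.sqrt (1 - sq0 k a)

lemma scf_sq (k : ℕ) (a : Fin k) : scf k a ^ 2 = sq0 k a :=
  Real.sq_sqrt (sq0_nonneg k a)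

lemma ccf_sq (k : ℕ) (a : Fin k) : ccf k a ^ 2 = 1 - sq0 k a :=
  Real.sq_sqrt (by linarith [sq0_le_one k a])

noncomputable def Bmat (k : ℕ) : Matrix (Fin k ⊕ Fin k) (Fin k ⊕ Fin k) ℝ :=
  fromBlocks (diagonal (ccf k)) (diagonal (fun a => -(scf k a)))
             (diagonal (scf k)) (diagonal (ccf k))

lemma Bmat_orth (k : ℕ) : (Bmat k)ᵀ * Bmat k = 1 := by
  have h1 : ∀ a : Fin k, ccf k a * ccf k a + scf k a * scf k a = 1 := fun a => by
    have := scf_sq k a; have := ccf_sq k a; nlinarith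
  have key : ∀ (f g : Fin k → ℝ) (c : ℝ), (∀ a, f a + g a = c) →
      diagonal f + diagonal g = diagonal (fun _ => c) := by
    intro f g c hc
    ext a b
    rcases eq_or_ne a b with rfl | hab
    · simp [Matrix.add_apply, Matrix.diagonal_apply_eq, hc a]
    · simp [Matrix.add_apply, Matrix.diagonal_apply_ne _ hab]
  unfold Bmat
  rw [fromBlocks_transpose, fromBlocks_multiply]
  simp only [diagonal_transpose, diagonal_mul_diagonal]
  rw [key _ _ 1 h1, key _ _ 0 (fun a => by ring), key _ _ 0 (fun a => by ring),
    key _ _ 1 (fun a => by nlinarith [h1 a])]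
  rw [show (diagonal (fun _ : Fin k => (1:ℝ))) = 1 from by simp,
    show (diagonal (fun _ : Fin k => (0:ℝ))) = 0 from by simp,
    fromBlocks_one]

def eqv {m k : ℕ} (h : k + k = m) : (Fin k ⊕ Fin k) ≃ Fin m :=
  finSumFinEquiv.trans (finCongr h)

noncomputable def TT (m : ℕ) : Matrix (Fin m) (Fin m) ℝ :=
  if h : m % 2 = 0 then
    (Bmat (m/2)).submatrix (eqv (show m/2 + m/2 = m by omega)).symm
      (eqv (show m/2 + m/2 = m by omega)).symm
  else 1

lemma TT_orth (m : ℕ) (hm : m % 2 = 0) : (TT m)ᵀ * TT m = 1 := by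
  rw [TT, dif_pos hm, transpose_submatrix, submatrix_mul_equiv, Bmat_orth,
    submatrix_one_equiv]

lemma eqv_inl_val {m k : ℕ} (h : k + k = m) (a : Fin k) :
    ((eqv h (Sum.inl a)) : ℕ) = (a : ℕ) := by
  simp [eqv]

lemma eqv_inr_val {m k : ℕ} (h : k + k = m) (a : Fin k) :
    ((eqv h (Sum.inr a)) : ℕ) = k + (a : ℕ) := by
  simp [eqv]
  omega

lemma tail_sum {m k : ℕ} (h : k + k = m) (f : Fin m → ℝ) :
    ∑ j ∈ univ.filter (fun j : Fin m => m / 2 ≤ (j : ℕ)), f j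
      = ∑ a : Fin k, f (eqv h (Sum.inr a)) := by
  have hk : m / 2 = k := by omega
  rw [sum_filter, ← Equiv.sum_comp (eqv h) (fun j => if m / 2 ≤ (j:ℕ) then f j else 0)]
  rw [Fintype.sum_sum_type]
  have e1 : ∑ a : Fin k, (if m / 2 ≤ ((eqv h (Sum.inl a)) : ℕ) then f (eqv h (Sum.inl a)) else 0) = 0 := by
    apply Finset.sum_eq_zero
    intro a _
    rw [if_neg]
    rw [eqv_inl_val]
    have := a.isLt
    omega
  have e2 : ∀ a : Fin k, (if m / 2 ≤ ((eqv h (Sum.inr a)) : ℕ) then f (eqv h (Sum.inr a)) else 0) = f (eqv h (Sum.inr a)) := by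
    intro a
    rw [if_pos]
    rw [eqv_inr_val]
    omega
  rw [e1, zero_add]
  exact Finset.sum_congr rfl (fun a _ => e2 a)

lemma eqv_symm_lt {m k : ℕ} (h : k + k = m) (i : Fin m) (hi : (i:ℕ) < k) :
    (eqv h).symm i = Sum.inl ⟨(i:ℕ), hi⟩ := by
  rw [Equiv.symm_apply_eq]
  apply Fin.ext
  rw [eqv_inl_val]

lemma eqv_symm_ge {m k : ℕ} (h : k + k = m) (i : Fin m) (hi : k ≤ (i:ℕ)) :
    (eqv h).symm i = Sum.inr ⟨(i:ℕ) - k, by have := i.isLt; omega⟩ := by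
  rw [Equiv.symm_apply_eq]
  apply Fin.ext
  rw [eqv_inr_val]
  simp only [Fin.val_mk]
  have := i.isLt
  omega

lemma TT_apply {m k : ℕ} (h : k + k = m) (i : Fin m) (a : Fin k) :
    TT m i (eqv h (Sum.inr a)) = Bmat k ((eqv h).symm i) (Sum.inr a) := by
  have hm : m % 2 = 0 := by omega
  have hk : m / 2 = k := by omega
  rw [TT, dif_pos hm]
  subst hk
  rw [submatrix_apply, Equiv.symm_apply_apply]

lemma sigma_lt {m k : ℕ} (h : k + k = m) (i : Fin m) (hi : (i:ℕ) < k) :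
    ∑ j ∈ univ.filter (fun j : Fin m => m / 2 ≤ (j : ℕ)), (TT m i j) ^ 2
      = sq0 k ⟨(i:ℕ), hi⟩ := by
  rw [tail_sum h (fun j => (TT m i j)^2)]
  have e : ∀ a : Fin k, TT m i (eqv h (Sum.inr a))
      = (if (⟨(i:ℕ), hi⟩ : Fin k) = a then -(scf k ⟨(i:ℕ), hi⟩) else 0) := by
    intro a
    rw [TT_apply h, eqv_symm_lt h i hi]
    simp [Bmat, fromBlocks_apply₁₂, diagonal_apply]
  calc ∑ a : Fin k, (TT m i (eqv h (Sum.inr a)))^2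
      = ∑ a : Fin k, (if (⟨(i:ℕ), hi⟩ : Fin k) = a then (scf k ⟨(i:ℕ), hi⟩)^2 else 0) := by
        apply Finset.sum_congr rfl
        intro a _
        rw [e a]
        split_ifs <;> ring
    _ = (scf k ⟨(i:ℕ), hi⟩)^2 := by rw [Finset.sum_ite_eq, if_pos (mem_univ _)]
    _ = sq0 k ⟨(i:ℕ), hi⟩ := scf_sq k _

lemma sigma_ge {m k : ℕ} (h : k + k = m) (i : Fin m) (hi : k ≤ (i:ℕ)) :
    ∑ j ∈ univ.filter (fun j : Fin m => m / 2 ≤ (j : ℕ)), (TT m i j) ^ 2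
      = 1 - sq0 k ⟨(i:ℕ) - k, by have := i.isLt; omega⟩ := by
  rw [tail_sum h (fun j => (TT m i j)^2)]
  set b : Fin k := ⟨(i:ℕ) - k, by have := i.isLt; omega⟩
  have e : ∀ a : Fin k, TT m i (eqv h (Sum.inr a))
      = (if b = a then ccf k b else 0) := by
    intro a
    rw [TT_apply h, eqv_symm_ge h i hi]
    simp [Bmat, fromBlocks_apply₂₂, diagonal_apply, b]
  calc ∑ a : Fin k, (TT m i (eqv h (Sum.inr a)))^2
      = ∑ a : Fin k, (if b = a then (ccf k b)^2 else 0) := by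
        apply Finset.sum_congr rfl
        intro a _
        rw [e a]
        split_ifs <;> ring
    _ = (ccf k b)^2 := by rw [Finset.sum_ite_eq, if_pos (mem_univ _)]
    _ = 1 - sq0 k b := ccf_sq k _

lemma sq0_zero_of (k : ℕ) (a : Fin k) (ha : (a:ℕ) = 0) : sq0 k a = ((k:ℝ))⁻¹ := by
  unfold sq0; rw [if_pos ha]

lemma sq0_eq_one_of (k : ℕ) (hk : 2 ≤ k) (a : Fin k) (ha : (a:ℕ) = k - 1) :
    sq0 k a = 1 := by
  unfold sq0; rw [if_neg (by omega), if_pos ha]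

lemma sq0_lt_one (k : ℕ) (hk : 2 ≤ k) (a : Fin k) (ha : (a:ℕ) ≠ k - 1) :
    sq0 k a < 1 := by
  have h1 : (1:ℝ) < (k:ℝ) := by exact_mod_cast (by omega : 1 < k)
  unfold sq0; split_ifs with hA hB
  · first
    | exact inv_lt_one_of_one_lt₀ h1
    | exact inv_lt_one_of_one_lt₀ h1
  · norm_num



/-- For fixed `δ ∈ (0, 1/2)` there is, for every even `m ≥ 8`, an orthogonal
matrix `T_m` and positive nonincreasing eigenvalues summing to `m` such that, with `k = m/2`
and residual variances `σ_{i,m}`: (1) `liminf λ_{m,m} > 0`; (2) the tail bound holds;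
(3) `σ_{i,m} > 0` for `1 ≤ i ≤ m − 1` (0-based: `(i : ℕ) < m − 1`) but `σ_{m,m} = 0`
(0-based index `m − 1`); (4) `lim σ_{1,m} = 0` (0-based index `0`) and
`liminf σ_{k+1,m} > 0` (0-based index `k = m/2`), with the asymptotics along even `m → ∞`. -/
theorem stmt4 (δ : ℝ) (hδ0 : 0 < δ) (hδ1 : δ < 1 / 2) :
    ∃ (T : (m : ℕ) → Matrix (Fin m) (Fin m) ℝ) (lam : (m : ℕ) → Fin m → ℝ),
      (∀ m : ℕ, 8 ≤ m → Even m →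
        (T m)ᵀ * T m = 1 ∧
        (∀ i j : Fin m, i ≤ j → lam m j ≤ lam m i) ∧
        (∀ j : Fin m, 0 < lam m j) ∧
        (∑ j : Fin m, lam m j) = (m : ℝ) ∧
        -- (2) the tail eigenvalue bound with k = m/2
        (m : ℝ)⁻¹ *
            Real.sqrt (∑ j ∈ univ.filter (fun j : Fin m => m / 2 ≤ (j : ℕ)), lam m j ^ 2) ≤
          (m : ℝ) ^ (-δ) ∧
        -- (3) σ_{i,m} > 0 for 1 ≤ i ≤ m − 1 but σ_{m,m} = 0
        (∀ i : Fin m, (i : ℕ) < m - 1 →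
          0 < ∑ j ∈ univ.filter (fun j : Fin m => m / 2 ≤ (j : ℕ)), lam m j * T m i j ^ 2) ∧
        (∀ i : Fin m, (i : ℕ) = m - 1 →
          (∑ j ∈ univ.filter (fun j : Fin m => m / 2 ≤ (j : ℕ)), lam m j * T m i j ^ 2) = 0)) ∧
      -- (1) liminf_{m→∞} λ_{m,m} > 0 along even m
      (∃ c : ℝ, 0 < c ∧ ∃ M : ℕ, ∀ m : ℕ, M ≤ m → 8 ≤ m → Even m →
        ∀ i : Fin m, (i : ℕ) = m - 1 → c ≤ lam m i) ∧
      -- (4) lim_{m→∞} σ_{1,m} = 0 along even m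
      (∀ ε : ℝ, 0 < ε → ∃ M : ℕ, ∀ m : ℕ, M ≤ m → 8 ≤ m → Even m →
        ∀ i : Fin m, (i : ℕ) = 0 →
          (∑ j ∈ univ.filter (fun j : Fin m => m / 2 ≤ (j : ℕ)), lam m j * T m i j ^ 2) < ε) ∧
      -- (4) liminf_{m→∞} σ_{k+1,m} > 0 along even m (0-based index k = m/2)
      (∃ c : ℝ, 0 < c ∧ ∃ M : ℕ, ∀ m : ℕ, M ≤ m → 8 ≤ m → Even m →
        ∀ i : Fin m, (i : ℕ) = m / 2 →
          c ≤ ∑ j ∈ univ.filter (fun j : Fin m => m / 2 ≤ (j : ℕ)), lam m j * T m i j ^ 2) := by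
  refine ⟨TT, fun m _ => (1:ℝ), ?_, ⟨1, one_pos, 0, fun m _ _ _ i _ => le_refl 1⟩, ?_, ?_⟩
  · intro m h8 hev
    have hm2 : m % 2 = 0 := Nat.even_iff.mp hev
    have h : m / 2 + m / 2 = m := by omega
    have hk4 : 4 ≤ m / 2 := by omega
    have hm0 : (0:ℝ) < (m:ℝ) := by exact_mod_cast (by omega : 0 < m)
    refine ⟨TT_orth m hm2, fun i j _ => le_refl 1, fun j => one_pos, ?_, ?_, ?_, ?_⟩
    · simp
    · -- tail bound
      have hsum : (∑ j ∈ univ.filter (fun j : Fin m => m / 2 ≤ (j : ℕ)), (1:ℝ) ^ 2)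
          = ((m / 2 : ℕ) : ℝ) := by
        rw [tail_sum h (fun _ => (1:ℝ)^2)]; simp
      rw [hsum]
      have hm1 : (1:ℝ) ≤ (m:ℝ) := by exact_mod_cast (by omega : 1 ≤ m)
      have hs1 : Real.sqrt ((m/2 : ℕ):ℝ) ≤ Real.sqrt (m:ℝ) :=
        Real.sqrt_le_sqrt (by exact_mod_cast Nat.div_le_self m 2)
      have hs2 : Real.sqrt (m:ℝ) = (m:ℝ) ^ ((1:ℝ)/2) := Real.sqrt_eq_rpow _
      have hs3 : (m:ℝ) ^ ((1:ℝ)/2) ≤ (m:ℝ) ^ ((1:ℝ) - δ) :=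
        Real.rpow_le_rpow_of_exponent_le hm1 (by linarith)
      calc (m:ℝ)⁻¹ * Real.sqrt ((m/2 : ℕ):ℝ)
          ≤ (m:ℝ)⁻¹ * ((m:ℝ) ^ ((1:ℝ) - δ)) := by
            apply mul_le_mul_of_nonneg_left _ (by positivity)
            rw [hs2] at hs1
            linarith
        _ = (m:ℝ) ^ (-δ) := by
            rw [show (m:ℝ)⁻¹ = (m:ℝ) ^ (-1:ℝ) from (Real.rpow_neg_one _).symm,
              ← Real.rpow_add hm0]
            congr 1
            ring
    · -- σ_i > 0 for i < m-1
      intro i hi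
      simp only [one_mul]
      by_cases hik : (i:ℕ) < m / 2
      · rw [sigma_lt h i hik]
        exact sq0_pos _ _
      · have hik' : m / 2 ≤ (i:ℕ) := le_of_not_gt hik
        rw [sigma_ge h i hik']
        have hlt : sq0 (m/2) ⟨(i:ℕ) - m/2, by have := i.isLt; omega⟩ < 1 := by
          apply sq0_lt_one _ (by omega)
          simp only [Fin.val_mk]
          omega
        linarith
    · -- σ_{m-1} = 0
      intro i hi
      simp only [one_mul]
      have hik' : m / 2 ≤ (i:ℕ) := by omega
      rw [sigma_ge h i hik']
      rw [sq0_eq_one_of _ (by omega) _ (by simp only [Fin.val_mk]; omega)]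
      ring
  · -- σ_0 → 0
    intro ε hε
    obtain ⟨N, hN⟩ := exists_nat_gt (1/ε)
    refine ⟨2*N + 2, fun m hM h8 hev i hi0 => ?_⟩
    have hm2 : m % 2 = 0 := Nat.even_iff.mp hev
    have h : m / 2 + m / 2 = m := by omega
    simp only [one_mul]
    have hik : (i:ℕ) < m / 2 := by omega
    rw [sigma_lt h i hik, sq0_zero_of _ _ (by simp only [Fin.val_mk]; omega)]
    have hkN : (N:ℝ) < ((m/2 : ℕ):ℝ) := by exact_mod_cast (by omega : N < m/2)
    have hkpos : (0:ℝ) < ((m/2 : ℕ):ℝ) := by exact_mod_cast (by omega : 0 < m/2)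
    have h1 : (1:ℝ)/ε < ((m/2 : ℕ):ℝ) := lt_trans hN hkN
    rw [div_lt_iff₀ hε] at h1
    rw [show (((m/2 : ℕ):ℝ))⁻¹ = 1 / ((m/2 : ℕ):ℝ) from (one_div _).symm, div_lt_iff₀ hkpos]
    nlinarith
  · -- σ_{k} bounded below
    refine ⟨1/2, by norm_num, 0, fun m _ h8 hev i hik => ?_⟩
    have hm2 : m % 2 = 0 := Nat.even_iff.mp hev
    have h : m / 2 + m / 2 = m := by omega
    simp only [one_mul]
    have hik' : m / 2 ≤ (i:ℕ) := by omega
    rw [sigma_ge h i hik', sq0_zero_of _ _ (by simp only [Fin.val_mk]; omega)]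
    have hk4 : (4:ℝ) ≤ ((m/2 : ℕ):ℝ) := by exact_mod_cast (by omega : 4 ≤ m/2)
    have hkpos : (0:ℝ) < ((m/2 : ℕ):ℝ) := by linarith
    have hinv : (((m/2 : ℕ):ℝ))⁻¹ ≤ 1/4 := by
      rw [show (1:ℝ)/4 = ((4:ℝ))⁻¹ by norm_num]
      first
      | exact inv_anti₀ (by norm_num) hk4
      | exact inv_anti₀ (by norm_num) hk4
    linarith
end

section
/- Let {X_n}_{n=1}^∞ be a sequence of real-valued random variables on a probability space such that E[|X_n|²] ≤ 1 for every n and |X_n| ≤ 1 almost surely for every n. If Σ_{N=1}^∞ N^{-1}·E[|N^{-1} Σ_{n=1}^N X_n|²] < ∞, then N^{-1} Σ_{n=1}^N X_n → 0 almost surely as N → ∞. -/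
open MeasureTheory ProbabilityTheory Filter Finset


-- Lemma A: a.e. convergence along a sequence with summable second moments
lemma lyons_aux_A {Ω : Type*} [MeasureSpace Ω] [IsProbabilityMeasure (ℙ : Measure Ω)]
    (f : ℕ → Ω → ℝ) (hf : ∀ k, Measurable (f k))
    (hb : ∀ k, ∀ᵐ ω ∂(ℙ : Measure Ω), |f k ω| ≤ 1)
    (hsum : Summable fun k => ∫ ω, |f k ω| ^ 2 ∂(ℙ : Measure Ω)) :
    ∀ᵐ ω ∂(ℙ : Measure Ω), Tendsto (fun k => f k ω) atTop (nhds 0) := by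
  have hnn : ∀ k ω, (0:ℝ) ≤ |f k ω| ^ 2 := fun k ω => by positivity
  have hmeas2 : ∀ k, Measurable fun ω => ENNReal.ofReal (|f k ω| ^ 2) := fun k =>
    (((hf k).abs.pow_const 2)).ennreal_ofReal
  have hint : ∀ k, Integrable (fun ω => |f k ω| ^ 2) (ℙ : Measure Ω) := by
    intro k
    have h1 : ∀ᵐ ω ∂(ℙ : Measure Ω), ‖|f k ω| ^ 2‖ ≤ 1 := by
      filter_upwards [hb k] with ω h
      have : |f k ω| ^ 2 ≤ 1 := by nlinarith [abs_nonneg (f k ω)]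
      simpa [abs_of_nonneg (hnn k ω)] using this
    exact Integrable.mono' (integrable_const 1)
      (((hf k).abs.pow_const 2)).aemeasurable.aestronglyMeasurable h1
  have hlint : ∀ k, ∫⁻ ω, ENNReal.ofReal (|f k ω| ^ 2) ∂(ℙ : Measure Ω)
      = ENNReal.ofReal (∫ ω, |f k ω| ^ 2 ∂(ℙ : Measure Ω)) :=
    fun k => (ofReal_integral_eq_lintegral_ofReal (hint k)
      (Filter.Eventually.of_forall (hnn k))).symm
  have htsum : ∫⁻ ω, (∑' k, ENNReal.ofReal (|f k ω| ^ 2)) ∂(ℙ : Measure Ω) ≠ ⊤ := by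
    rw [lintegral_tsum (fun k => (hmeas2 k).aemeasurable)]
    simp_rw [hlint]
    rw [← ENNReal.ofReal_tsum_of_nonneg (fun k => integral_nonneg (hnn k)) hsum]
    exact ENNReal.ofReal_ne_top
  have hae : ∀ᵐ ω ∂(ℙ : Measure Ω), (∑' k, ENNReal.ofReal (|f k ω| ^ 2)) ≠ ⊤ := by
    have := ae_lt_top (Measurable.ennreal_tsum hmeas2) htsum
    filter_upwards [this] with ω h using h.ne
  filter_upwards [hae] with ω h
  have h0 : Tendsto (fun k => ENNReal.ofReal (|f k ω| ^ 2)) atTop (nhds 0) :=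
    ENNReal.tendsto_atTop_zero_of_tsum_ne_top h
  have h1 : Tendsto (fun k => f k ω ^ 2) atTop (nhds 0) := by
    have := (ENNReal.tendsto_toReal (by simp)).comp h0
    simp only [Function.comp_def, ENNReal.toReal_ofReal (hnn _ ω), ENNReal.toReal_zero] at this
    simpa [sq_abs] using this
  have h2 : Tendsto (fun k => |f k ω|) atTop (nhds 0) := by
    have := (Real.continuous_sqrt.continuousAt (x := (0:ℝ))).tendsto.comp h1
    simp only [Function.comp_def, Real.sqrt_sq_eq_abs] at this
    simpa using this
  exact squeeze_zero_norm (fun k => le_of_eq rfl) h2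


def lyonsM (j : ℕ) : ℕ → ℕ
  | 0 => j
  | k + 1 => lyonsM j k + lyonsM j k / j + 1

lemma lyonsM_ge (j : ℕ) : ∀ k, j ≤ lyonsM j k := by
  intro k; induction k with
  | zero => simp [lyonsM]
  | succ k ih =>
      simp only [lyonsM]
      exact le_trans ih (by generalize lyonsM j k / j = d; omega)

lemma lyonsM_mono (j : ℕ) : StrictMono (lyonsM j) := by
  apply strictMono_nat_of_lt_succ
  intro k; simp only [lyonsM]; generalize lyonsM j k / j = d; omega

-- j * m(k+1) ≤ m k * (j + 2), in ℕ
lemma lyonsM_step (j : ℕ) (hj : 1 ≤ j) (k : ℕ) :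
    j * lyonsM j (k + 1) ≤ lyonsM j k * (j + 2) := by
  have h1 : lyonsM j k / j * j ≤ lyonsM j k := Nat.div_mul_le_self _ _
  have h2 : j ≤ lyonsM j k := lyonsM_ge j k
  simp only [lyonsM]
  generalize hd : lyonsM j k / j = d at *
  nlinarith

lemma lyonsM_cast_succ (j : ℕ) (k : ℕ) :
    ((lyonsM j (k+1) : ℕ) : ℝ) = (lyonsM j k : ℝ) + ((lyonsM j k / j : ℕ) : ℝ) + 1 := by
  simp only [lyonsM]; push_cast; ring

lemma lyonsM_floor (j : ℕ) (hj : 1 ≤ j) (n : ℕ) :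
    (n : ℝ) / j ≤ ((n / j : ℕ) : ℝ) + 1 := by
  have hj' : (0:ℝ) < j := by exact_mod_cast hj
  rw [div_le_iff₀ hj']
  have hdm : (j * (n / j) + n % j : ℕ) = n := Nat.div_add_mod _ _
  have hmod : ((n % j : ℕ) : ℝ) < j := by
    exact_mod_cast Nat.mod_lt _ (by omega)
  have hcast : (n : ℝ) = j * ((n / j : ℕ) : ℝ) + ((n % j : ℕ) : ℝ) := by
    exact_mod_cast hdm.symm
  nlinarith

lemma lyonsM_two_step (j : ℕ) (hj : 1 ≤ j) (k : ℕ) :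
    ((lyonsM j (k+2) : ℝ)) - (lyonsM j k : ℝ) ≤ 8 * (lyonsM j k : ℝ) / j := by
  have hj' : (0:ℝ) < j := by exact_mod_cast hj
  have hj1 : (1:ℝ) ≤ j := by exact_mod_cast hj
  have s1 : (j:ℝ) * lyonsM j (k+1) ≤ (lyonsM j k : ℝ) * (j + 2) := by
    exact_mod_cast lyonsM_step j hj k
  have s2 : (j:ℝ) * lyonsM j (k+2) ≤ (lyonsM j (k+1) : ℝ) * (j + 2) := by
    exact_mod_cast lyonsM_step j hj (k+1)
  have hB : (0:ℝ) ≤ (lyonsM j k : ℝ) := Nat.cast_nonneg _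
  set A := (lyonsM j (k+2) : ℝ)
  set C := (lyonsM j (k+1) : ℝ)
  set B := (lyonsM j k : ℝ)
  have hsq : (j:ℝ)^2 * A ≤ B * (j+2)^2 := by
    have h1 : (j:ℝ) * ((j:ℝ) * A) ≤ (j:ℝ) * (C * (j+2)) :=
      mul_le_mul_of_nonneg_left s2 hj'.le
    have h2 : ((j:ℝ) * C) * (j+2) ≤ (B * (j+2)) * (j+2) :=
      mul_le_mul_of_nonneg_right s1 (by positivity)
    nlinarith
  have hineq : (j:ℝ) * A ≤ B * (j + 8) := by
    have h3 : B * (j+2)^2 ≤ B * ((j:ℝ)^2 + 8*j) := by nlinarith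
    have h4 : (j:ℝ) * ((j:ℝ) * A) ≤ (j:ℝ) * (B * (j+8)) := by nlinarith
    exact le_of_mul_le_mul_left h4 hj'
  rw [le_div_iff₀ hj']
  nlinarith

lemma lyons_aux_B (j : ℕ) (hj : 1 ≤ j) (a : ℕ → ℝ) (ha : ∀ N, 0 ≤ a N)
    (hsum : Summable fun N : ℕ => ((N : ℝ) + 1)⁻¹ * a N) :
    ∃ φ : ℕ → ℕ, StrictMono φ ∧ Summable (fun k => a (φ k)) ∧
      ∀ k N, φ k ≤ N → N < φ (k + 1) → ((N : ℝ) - φ k) ≤ (8 / j) * ((N : ℝ) + 1) := by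
  classical
  set m := lyonsM j with hm
  have hj' : (0:ℝ) < j := by exact_mod_cast hj
  have hmlt : ∀ k, m k < m (k+1) := fun k => lyonsM_mono j (Nat.lt_succ_self k)
  have hne : ∀ k, (Finset.Ico (m k) (m (k+1))).Nonempty := fun k => ⟨m k, by
    simp [Finset.mem_Ico, hmlt k]⟩
  have H : ∀ k, ∃ p ∈ Finset.Ico (m k) (m (k+1)), ∀ q ∈ Finset.Ico (m k) (m (k+1)), a p ≤ a q :=
    fun k => Finset.exists_min_image _ a (hne k)
  choose φ hmem hmin using H
  have hφlo : ∀ k, m k ≤ φ k := fun k => (Finset.mem_Ico.1 (hmem k)).1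
  have hφhi : ∀ k, φ k < m (k+1) := fun k => (Finset.mem_Ico.1 (hmem k)).2
  have hφmono : StrictMono φ := strictMono_nat_of_lt_succ fun k =>
    lt_of_lt_of_le (hφhi k) (hφlo (k+1))
  refine ⟨φ, hφmono, ?_, ?_⟩
  · -- summability
    set w : ℕ → ℝ := fun N => ((N : ℝ) + 1)⁻¹ * a N with hw
    have hwnn : ∀ N, 0 ≤ w N := fun N => mul_nonneg (by positivity) (ha N)
    have hblock : Summable fun k => ∑ N ∈ Finset.Ico (m k) (m (k+1)), w N := by
      apply summable_of_sum_range_le (fun k => Finset.sum_nonneg fun N _ => hwnn N)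
        (c := ∑' N, w N)
      intro K
      have hsplit : ∑ k ∈ range K, ∑ N ∈ Finset.Ico (m k) (m (k+1)), w N
          = ∑ N ∈ Finset.Ico (m 0) (m K), w N := by
        induction K with
        | zero => simp
        | succ K ih =>
            rw [Finset.sum_range_succ, ih,
              Finset.sum_Ico_consecutive _ ((lyonsM_mono j).monotone (Nat.zero_le K))
                ((lyonsM_mono j).monotone (Nat.le_succ K))]
      rw [hsplit]
      exact Summable.sum_le_tsum _ (fun N _ => hwnn N) hsum
    have hkey : ∀ k, a (φ k) ≤ (3 * j) * ∑ N ∈ Finset.Ico (m k) (m (k+1)), w N := by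
      intro k
      have hcard : (Finset.Ico (m k) (m (k+1))).card = m (k+1) - m k := Nat.card_Ico _ _
      have hmk1pos : (0:ℝ) < (m (k+1) : ℝ) := by
        have : 1 ≤ m (k+1) := le_trans hj (lyonsM_ge j (k+1))
        exact_mod_cast this
      have hlow : ∀ N ∈ Finset.Ico (m k) (m (k+1)),
          (m (k+1) : ℝ)⁻¹ * a (φ k) ≤ w N := by
        intro N hN
        obtain ⟨h1, h2⟩ := Finset.mem_Ico.1 hN
        have hN1 : (N:ℝ) + 1 ≤ (m (k+1) : ℝ) := by exact_mod_cast Nat.succ_le_of_lt h2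
        have hNpos : (0:ℝ) < (N:ℝ) + 1 := by positivity
        have hinv : (m (k+1) : ℝ)⁻¹ ≤ ((N:ℝ) + 1)⁻¹ := by
          apply inv_anti₀ hNpos hN1
        calc (m (k+1) : ℝ)⁻¹ * a (φ k) ≤ ((N:ℝ)+1)⁻¹ * a (φ k) :=
              mul_le_mul_of_nonneg_right hinv (ha _)
          _ ≤ ((N:ℝ)+1)⁻¹ * a N := mul_le_mul_of_nonneg_left (hmin k N hN) (by positivity)
      have hsum_low : ((m (k+1) - m k : ℕ) : ℝ) * ((m (k+1) : ℝ)⁻¹ * a (φ k))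
          ≤ ∑ N ∈ Finset.Ico (m k) (m (k+1)), w N := by
        rw [← hcard]
        have := Finset.card_nsmul_le_sum _ _ _ hlow
        simpa [nsmul_eq_mul] using this
      have hgap : ((m (k+1) - m k : ℕ) : ℝ) = ((m (k+1) : ℝ)) - (m k : ℝ) := by
        rw [Nat.cast_sub (hmlt k).le]
      have hge : (j:ℝ) ≤ (m k : ℝ) := by exact_mod_cast lyonsM_ge j k
      have hmk1 : (1:ℝ) ≤ (m k : ℝ) := le_trans (by exact_mod_cast hj) hge
      have hdivge : (m k : ℝ) / j ≤ ((m (k+1) : ℝ)) - (m k : ℝ) := by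
        have hco : (m (k+1) : ℝ) = (m k : ℝ) + ((m k / j : ℕ) : ℝ) + 1 := lyonsM_cast_succ j k
        have hfl := lyonsM_floor j hj (m k)
        rw [hco]; linarith
      have hup : (m (k+1) : ℝ) ≤ 3 * m k := by
        have hs := lyonsM_step j hj k
        have hs' : (j:ℝ) * m (k+1) ≤ (m k : ℝ) * (j + 2) := by exact_mod_cast hs
        have hj1 : (1:ℝ) ≤ j := by exact_mod_cast hj
        have h1 : (j:ℝ) * (m (k+1) : ℝ) ≤ (j:ℝ) * (3 * (m k : ℝ)) := by nlinarith
        exact le_of_mul_le_mul_left h1 hj'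
      -- core inequality: a (φ k) ≤ 3j * ((A - B) * (A⁻¹ * c))
      set A := (m (k+1) : ℝ)
      set B := (m k : ℝ)
      set c := a (φ k) with hc
      have hcnn : 0 ≤ c := ha _
      have hBj : B ≤ (A - B) * j := (div_le_iff₀ hj').1 hdivge
      have hA3 : A ≤ 3 * ((A - B) * j) := by linarith
      have hkey2 : c ≤ (3 * j) * ((A - B) * (A⁻¹ * c)) := by
        have heq : (3 * (j:ℝ)) * ((A - B) * (A⁻¹ * c)) = (3 * j * (A - B) * c) / A := by
          field_simp
        rw [heq, le_div_iff₀ hmk1pos]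
        nlinarith [mul_le_mul_of_nonneg_left hA3 hcnn]
      calc c ≤ (3 * (j:ℝ)) * ((A - B) * (A⁻¹ * c)) := hkey2
        _ ≤ (3 * j) * ∑ N ∈ Finset.Ico (m k) (m (k+1)), w N := by
            apply mul_le_mul_of_nonneg_left _ (by positivity)
            rw [← hgap]; exact hsum_low
    exact Summable.of_nonneg_of_le (fun k => ha _) hkey (hblock.mul_left _)
  · -- gap bound
    intro k N h1 h2
    have hNlt : N < m (k+2) := lt_of_lt_of_le h2 (hφhi (k+1)).le
    have hcast1 : (N:ℝ) < (m (k+2) : ℝ) := by exact_mod_cast hNlt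
    have hcast2 : (m k : ℝ) ≤ (φ k : ℝ) := by exact_mod_cast hφlo k
    have hcast3 : (φ k : ℝ) ≤ (N : ℝ) := by exact_mod_cast h1
    have h8 := lyonsM_two_step j hj k
    have hmklt : (m k : ℝ) ≤ (N:ℝ) + 1 := by linarith
    have hnn : (0:ℝ) ≤ (m k : ℝ) := Nat.cast_nonneg _
    calc ((N : ℝ) - φ k) ≤ (m (k+2) : ℝ) - (m k : ℝ) := by linarith
      _ ≤ 8 * (m k : ℝ) / j := h8
      _ ≤ 8 * ((N:ℝ) + 1) / j := by gcongr
      _ = (8 / j) * ((N : ℝ) + 1) := by ring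

/-- Lyons's SLLN: If `{X_n}` are real random variables with `E[|X_n|²] ≤ 1`,
`|X_n| ≤ 1` a.s., and `Σ_N N⁻¹ E[|N⁻¹ Σ_{n≤N} X_n|²] < ∞`, then `N⁻¹ Σ_{n≤N} X_n → 0` a.s.
The sequence is indexed by `ℕ` starting at `0`, with `N + 1` playing the role of `N ≥ 1`
and `Finset.range (N + 1)` the role of `{1, …, N}`. -/
theorem stmt5 {Ω : Type*} [MeasureSpace Ω] [IsProbabilityMeasure (ℙ : Measure Ω)]
    (X : ℕ → Ω → ℝ) (hmeas : ∀ n, Measurable (X n))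
    (hL2 : ∀ n, (∫ ω, |X n ω| ^ 2 ∂(ℙ : Measure Ω)) ≤ 1)
    (hbd : ∀ n, ∀ᵐ ω ∂(ℙ : Measure Ω), |X n ω| ≤ 1)
    (hsum : Summable fun N : ℕ =>
      ((N : ℝ) + 1)⁻¹ * ∫ ω, |((N : ℝ) + 1)⁻¹ * ∑ n ∈ range (N + 1), X n ω| ^ 2 ∂(ℙ : Measure Ω)) :
    ∀ᵐ ω ∂(ℙ : Measure Ω), Tendsto (fun N : ℕ => ((N : ℝ) + 1)⁻¹ * ∑ n ∈ range (N + 1), X n ω)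
      atTop (nhds 0) := by
  classical
  set S : ℕ → Ω → ℝ := fun N ω => ((N : ℝ) + 1)⁻¹ * ∑ n ∈ range (N + 1), X n ω with hS
  have hSmeas : ∀ N, Measurable (S N) := fun N =>
    (Finset.measurable_sum (range (N+1)) (fun n _ => hmeas n)).const_mul _
  have hX : ∀ᵐ ω ∂(ℙ : Measure Ω), ∀ n, |X n ω| ≤ 1 := ae_all_iff.2 hbd
  have hSboundpt : ∀ N (ω : Ω), (∀ n, |X n ω| ≤ 1) → |S N ω| ≤ 1 := by
    intro N ω h
    have hsum_abs : |∑ n ∈ range (N+1), X n ω| ≤ (N:ℝ) + 1 := by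
      calc |∑ n ∈ range (N+1), X n ω| ≤ ∑ n ∈ range (N+1), |X n ω| :=
            Finset.abs_sum_le_sum_abs _ _
        _ ≤ ∑ _n ∈ range (N+1), (1:ℝ) := Finset.sum_le_sum (fun n _ => h n)
        _ = (N:ℝ) + 1 := by simp
    have hpos : (0:ℝ) < (N:ℝ) + 1 := by positivity
    rw [hS]
    simp only [abs_mul, abs_of_pos (inv_pos.2 hpos)]
    calc ((N:ℝ)+1)⁻¹ * |∑ n ∈ range (N+1), X n ω| ≤ ((N:ℝ)+1)⁻¹ * ((N:ℝ)+1) :=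
          mul_le_mul_of_nonneg_left hsum_abs (by positivity)
      _ = 1 := inv_mul_cancel₀ hpos.ne'
  have hSbd : ∀ N, ∀ᵐ ω ∂(ℙ : Measure Ω), |S N ω| ≤ 1 := by
    intro N; filter_upwards [hX] with ω h using hSboundpt N ω h
  set a : ℕ → ℝ := fun N => ∫ ω, |S N ω| ^ 2 ∂(ℙ : Measure Ω) with ha
  have hann : ∀ N, 0 ≤ a N := fun N => integral_nonneg (fun ω => by positivity)
  have hasum : Summable fun N : ℕ => ((N : ℝ) + 1)⁻¹ * a N := hsum
  have hB : ∀ j : ℕ, ∃ φ : ℕ → ℕ, StrictMono φ ∧ Summable (fun k => a (φ k)) ∧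
      ∀ k N, φ k ≤ N → N < φ (k + 1) →
        ((N : ℝ) - φ k) ≤ (8 / (j+1 : ℕ)) * ((N : ℝ) + 1) :=
    fun j => lyons_aux_B (j+1) (Nat.le_add_left 1 j) a hann hasum
  choose φ hφmono hφsum hφgap using hB
  have hconv : ∀ j : ℕ, ∀ᵐ ω ∂(ℙ : Measure Ω),
      Tendsto (fun k => S (φ j k) ω) atTop (nhds 0) := fun j =>
    lyons_aux_A (fun k => S (φ j k)) (fun k => hSmeas _) (fun k => hSbd _) (hφsum j)
  filter_upwards [ae_all_iff.2 hconv, hX] with ω hcω hXω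
  show Tendsto (fun N => S N ω) atTop (nhds 0)
  rw [NormedAddCommGroup.tendsto_nhds_zero]
  intro ε hε
  -- pick j with 8/(j+1) < ε/2
  obtain ⟨j, hjgt⟩ := exists_nat_gt (16 / ε)
  have hj1pos : (0:ℝ) < (j:ℝ) + 1 := by positivity
  have hjε : 8 / ((j:ℝ) + 1) < ε / 2 := by
    have h16 : 16 / ε < (j:ℝ) + 1 := lt_of_lt_of_le hjgt (by linarith [Nat.cast_nonneg (α := ℝ) j])
    rw [div_lt_iff₀ hj1pos]
    rw [div_lt_iff₀ hε] at h16
    linarith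
  -- pick k₀
  have := (Metric.tendsto_atTop.1 (hcω j)) (ε/2) (by linarith)
  obtain ⟨k₀, hk₀⟩ := this
  rw [eventually_atTop]
  refine ⟨φ j k₀, fun N hN => ?_⟩
  -- find the block index k
  have hk₀N : k₀ ≤ N := le_trans (hφmono j).le_apply hN
  set k := Nat.findGreatest (fun i => φ j i ≤ N) N with hkdef
  have hk : φ j k ≤ N :=
    Nat.findGreatest_spec (P := fun i => φ j i ≤ N) hk₀N hN
  have hk₀k : k₀ ≤ k := Nat.le_findGreatest (P := fun i => φ j i ≤ N) hk₀N hN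
  have hklt : N < φ j (k + 1) := by
    by_contra hcon
    push_neg at hcon
    have h1 : k + 1 ≤ N := le_trans (hφmono j).le_apply hcon
    exact Nat.findGreatest_is_greatest (P := fun i => φ j i ≤ N)
      (Nat.lt_succ_self k) h1 hcon
  -- the quantitative bound
  have hSφ : |S (φ j k) ω| < ε / 2 := by
    have := hk₀ k hk₀k
    rwa [Real.dist_eq, sub_zero] at this
  have hgap := hφgap j k N hk hklt
  push_cast at hgap
  set Pℝ : ℝ := (φ j k : ℝ)
  set n : ℝ := (N : ℝ)
  have hPn : Pℝ ≤ n := Nat.cast_le.mpr hk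
  have hnpos : (0:ℝ) < n + 1 := by positivity
  have hPpos : (0:ℝ) < Pℝ + 1 := by positivity
  -- decomposition
  have hdecomp : ∑ i ∈ range (N+1), X i ω
      = ∑ i ∈ range (φ j k + 1), X i ω + ∑ i ∈ Finset.Ico (φ j k + 1) (N+1), X i ω :=
    (Finset.sum_range_add_sum_Ico _ (by omega)).symm
  have hhead : ∑ i ∈ range (φ j k + 1), X i ω = (Pℝ + 1) * S (φ j k) ω := by
    rw [hS]
    field_simp
    rfl
  have htail : |∑ i ∈ Finset.Ico (φ j k + 1) (N+1), X i ω| ≤ n - Pℝ := by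
    calc |∑ i ∈ Finset.Ico (φ j k + 1) (N+1), X i ω|
        ≤ ∑ i ∈ Finset.Ico (φ j k + 1) (N+1), |X i ω| := Finset.abs_sum_le_sum_abs _ _
      _ ≤ ∑ _i ∈ Finset.Ico (φ j k + 1) (N+1), (1:ℝ) := Finset.sum_le_sum (fun i _ => hXω i)
      _ = ((N + 1) - (φ j k + 1) : ℕ) := by simp
      _ = n - Pℝ := by
          rw [Nat.cast_sub (by omega)]
          push_cast
          ring
  have hbound : |S N ω| ≤ |S (φ j k) ω| + (n - Pℝ) / (n + 1) := by
    have h1 : |S N ω| = (n + 1)⁻¹ * |∑ i ∈ range (N+1), X i ω| := by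
      rw [hS]; simp only [abs_mul, abs_of_pos (inv_pos.2 hnpos)]; rw [abs_of_pos (inv_pos.2 hnpos)]
    rw [h1, hdecomp]
    have h2 : |(Pℝ + 1) * S (φ j k) ω + ∑ i ∈ Finset.Ico (φ j k + 1) (N+1), X i ω|
        ≤ (Pℝ + 1) * |S (φ j k) ω| + (n - Pℝ) := by
      calc |(Pℝ + 1) * S (φ j k) ω + ∑ i ∈ Finset.Ico (φ j k + 1) (N+1), X i ω|
          ≤ |(Pℝ + 1) * S (φ j k) ω| + |∑ i ∈ Finset.Ico (φ j k + 1) (N+1), X i ω| :=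
            abs_add_le _ _
        _ ≤ (Pℝ + 1) * |S (φ j k) ω| + (n - Pℝ) := by
            rw [abs_mul, abs_of_pos hPpos]
            linarith [htail]
    rw [hhead]
    calc (n + 1)⁻¹ * |(Pℝ + 1) * S (φ j k) ω + ∑ i ∈ Finset.Ico (φ j k + 1) (N+1), X i ω|
        ≤ (n + 1)⁻¹ * ((Pℝ + 1) * |S (φ j k) ω| + (n - Pℝ)) :=
          mul_le_mul_of_nonneg_left h2 (by positivity)
      _ = ((Pℝ + 1) / (n + 1)) * |S (φ j k) ω| + (n - Pℝ) / (n + 1) := by ring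
      _ ≤ 1 * |S (φ j k) ω| + (n - Pℝ) / (n + 1) := by
          apply add_le_add_left
          apply mul_le_mul_of_nonneg_right _ (abs_nonneg _)
          rw [div_le_one hnpos]
          linarith
      _ = |S (φ j k) ω| + (n - Pℝ) / (n + 1) := by rw [one_mul]
  have hgap2 : (n - Pℝ) / (n + 1) ≤ 8 / ((j:ℝ) + 1) := by
    rw [div_le_div_iff₀ hnpos hj1pos]
    have : (n - Pℝ) ≤ 8 / ((j:ℝ)+1) * (n + 1) := hgap
    rw [div_mul_eq_mul_div, le_div_iff₀ hj1pos] at this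
    linarith
  rw [Real.norm_eq_abs]
  calc |S N ω| ≤ |S (φ j k) ω| + (n - Pℝ) / (n + 1) := hbound
    _ < ε / 2 + 8 / ((j:ℝ) + 1) := by linarith
    _ < ε / 2 + ε / 2 := by linarith
    _ = ε := by ring
end
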